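/- arXiv:2106.15536 — 4 statements merged into one kernel-verified Lean document; each statement's English description precedes it below -/
import Mathlib

section
/- Let μ ≥ 0, g be μ-strongly convex proper closed, λ > 0, and (x, v, z) ∈ ℝ^d × ℝ^d × ℝ^d. If w ∈ ℝ^d satisfies v - μx + μw ∈ ∂g(w), then PD_{(λ/(1+λμ)) g_μ}(x, v - μx; z/(1+λμ)) = (1/(2(1+λμ)²))‖x - z + λv‖² + (λ/(1+λμ))( g(x) - g(w) + (μ/2)‖x - w‖² - ⟨x - w, v⟩ ), where g_μ(·) = g(·) - (μ/2)‖·‖². -/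
open RealInnerProductSpace

/-- `v - μx ∈ ∂ g_μ(w)`: subgradient inequality for the Moreau-shifted function. -/
lemma gmu_subgrad {d : ℕ} (μ : ℝ) (hμ : 0 ≤ μ)
    (g : EuclideanSpace ℝ (Fin d) → ℝ)
    (hg : ConvexOn ℝ Set.univ (fun u => g u - μ / 2 * ‖u‖ ^ 2))
    (x v w : EuclideanSpace ℝ (Fin d))
    (hw : ∀ u, g w + ⟪v - μ • x + μ • w, u - w⟫ ≤ g u)
    (y : EuclideanSpace ℝ (Fin d)) :
    (g w - μ / 2 * ‖w‖ ^ 2) + ⟪v - μ • x, y - w⟫ ≤ g y - μ / 2 * ‖y‖ ^ 2 := by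
  have ht : ∀ t : ℝ, 0 < t → t < 1 →
      ⟪v - μ • x, y - w⟫ - μ / 2 * t * ‖y - w‖ ^ 2
        ≤ (g y - μ / 2 * ‖y‖ ^ 2) - (g w - μ / 2 * ‖w‖ ^ 2) := by
    intro t ht0 ht1
    have hc := hg.2 (Set.mem_univ w) (Set.mem_univ y)
      (by linarith : (0:ℝ) ≤ 1 - t) (le_of_lt ht0) (by ring)
    have hp := hw ((1 - t) • w + t • y)
    simp only [smul_eq_mul] at hc
    simp only [← real_inner_self_eq_norm_sq, inner_sub_left, inner_sub_right,
      inner_add_left, inner_add_right, real_inner_smul_left, real_inner_smul_right] at hc hp ⊢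
    rw [real_inner_comm y w] at *
    nlinarith [hc, hp, ht0, sq_nonneg t]
  by_contra hA
  push_neg at hA
  set A := (g y - μ / 2 * ‖y‖ ^ 2) - (g w - μ / 2 * ‖w‖ ^ 2) - ⟪v - μ • x, y - w⟫ with hAdef
  have hAneg : A < 0 := by simp only [hAdef]; linarith
  have hK : (0:ℝ) ≤ μ / 2 * ‖y - w‖ ^ 2 := by positivity
  set c := μ / 2 * ‖y - w‖ ^ 2 with hcdef
  have htpos : 0 < min (1/2) (-A / (2 * c + 1)) := by
    apply lt_min (by norm_num)
    apply div_pos (by linarith) (by linarith)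
  have htlt : min (1/2) (-A / (2 * c + 1)) < 1 :=
    lt_of_le_of_lt (min_le_left _ _) (by norm_num)
  have := ht _ htpos htlt
  have h1 : min (1/2) (-A / (2 * c + 1)) ≤ -A / (2 * c + 1) := min_le_right _ _
  have h2 : c * (min (1/2) (-A / (2 * c + 1))) ≤ c * (-A / (2 * c + 1)) :=
    mul_le_mul_of_nonneg_left h1 hK
  have h3 : c * (-A / (2 * c + 1)) < -A := by
    rw [mul_div_assoc']
    rw [div_lt_iff₀ (by linarith)]
    nlinarith
  have h4 : A ≥ -(c * (min (1/2) (-A / (2 * c + 1)))) := by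
    simp only [hAdef, hcdef] at *
    linarith
  linarith

/-- Explicit expression of the primal-dual gap for the strongly convex proximal
subproblem: with `g_μ = g - (μ/2)‖·‖²` and `w` satisfying `v - μx + μw ∈ ∂g(w)`,
`PD_{(λ/(1+λμ)) g_μ}(x, v - μx; z/(1+λμ)) = (1/(2(1+λμ)²))‖x - z + λv‖²
  + (λ/(1+λμ))(g x - g w + (μ/2)‖x-w‖² - ⟪x - w, v⟫)`. -/
theorem pd_gap_strongly_convex {d : ℕ} (μ : ℝ) (hμ : 0 ≤ μ)
    (g gmustar : EuclideanSpace ℝ (Fin d) → ℝ)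
    (hg : ConvexOn ℝ Set.univ (fun u => g u - μ / 2 * ‖u‖ ^ 2))
    (hlsc : LowerSemicontinuous g)
    (hstar : ∀ u, IsLUB {r : ℝ | ∃ y, r = ⟪u, y⟫ - (g y - μ / 2 * ‖y‖ ^ 2)} (gmustar u))
    (lam : ℝ) (hlam : 0 < lam) (x v z w : EuclideanSpace ℝ (Fin d))
    (hw : ∀ u, g w + ⟪v - μ • x + μ • w, u - w⟫ ≤ g u) :
    (lam / (1 + lam * μ)) * (g x - μ / 2 * ‖x‖ ^ 2) + ‖x - (1 + lam * μ)⁻¹ • z‖ ^ 2 / 2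
      - (-((lam / (1 + lam * μ)) * gmustar (v - μ • x))
          - ‖(1 + lam * μ)⁻¹ • z - (lam / (1 + lam * μ)) • (v - μ • x)‖ ^ 2 / 2
          + ‖(1 + lam * μ)⁻¹ • z‖ ^ 2 / 2) =
    1 / (2 * (1 + lam * μ) ^ 2) * ‖x - z + lam • v‖ ^ 2
      + lam / (1 + lam * μ) * (g x - g w + μ / 2 * ‖x - w‖ ^ 2 - ⟪x - w, v⟫) := by
  have hs : (0:ℝ) < 1 + lam * μ := by positivity
  have hmax : IsGreatest
      {r : ℝ | ∃ y, r = ⟪v - μ • x, y⟫ - (g y - μ / 2 * ‖y‖ ^ 2)}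
      (⟪v - μ • x, w⟫ - (g w - μ / 2 * ‖w‖ ^ 2)) := by
    constructor
    · exact ⟨w, rfl⟩
    · rintro r ⟨y, rfl⟩
      have := gmu_subgrad μ hμ g hg x v w hw y
      have h0 : (⟪v - μ • x, y - w⟫ : ℝ) = ⟪v - μ • x, y⟫ - ⟪v - μ • x, w⟫ := by
        rw [inner_sub_right]
      linarith [h0 ▸ this]
  have hgs : gmustar (v - μ • x) = ⟪v - μ • x, w⟫ - (g w - μ / 2 * ‖w‖ ^ 2) :=
    (hstar (v - μ • x)).unique hmax.isLUB
  rw [hgs]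
  have hs' : (1 + lam * μ) ≠ 0 := ne_of_gt hs
  simp only [← real_inner_self_eq_norm_sq, inner_sub_left, inner_sub_right,
    inner_add_left, inner_add_right, real_inner_smul_left, real_inner_smul_right]
  simp only [real_inner_comm w v, real_inner_comm w x,
    real_inner_comm z x, real_inner_comm v x, real_inner_comm z v, real_inner_comm w z]
  field_simp
  ring
end

section
/- Let μ > 0, η > 0 and let the sequence (A_k) satisfy A_0 ≥ 0 and A_{k+1} = A_k + (η + 2A_kμη + √(η² + 4ηA_k(1+ημ)(1+A_kμ)))/2. Then for every k, A_{k+1} ≥ A_k / (1 - √(ημ/(1+ημ))); consequently if A_1 ≥ η, then A_k ≥ η (1 - √(ημ/(1+ημ)))^{-(k-1)} for all k ≥ 1. -/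
/-- Exponential growth of the accelerated coefficients in the strongly convex case:
with the recurrence `A_{k+1} = A_k + (η + 2A_kμη + √(η² + 4ηA_k(1+ημ)(1+A_kμ)))/2`,
one has `A_{k+1} ≥ A_k / (1 - √(ημ/(1+ημ)))`, and if `A 1 ≥ η` then
`A_k ≥ η (1 - √(ημ/(1+ημ)))^{-(k-1)}` for `k ≥ 1`. -/
theorem coefficients_exponential_growth (μ η : ℝ) (hμ : 0 < μ) (hη : 0 < η)
    (A : ℕ → ℝ) (hA0 : 0 ≤ A 0)
    (hrec : ∀ k, A (k + 1) = A k + (η + 2 * A k * μ * η +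
      Real.sqrt (η ^ 2 + 4 * η * A k * (1 + η * μ) * (1 + A k * μ))) / 2) :
    (∀ k, A (k + 1) ≥ A k / (1 - Real.sqrt (η * μ / (1 + η * μ)))) ∧
    (A 1 ≥ η → ∀ k, 1 ≤ k →
      A k ≥ η / (1 - Real.sqrt (η * μ / (1 + η * μ))) ^ (k - 1)) := by
  set s := Real.sqrt (η * μ / (1 + η * μ)) with hs_def
  have h1a : (0:ℝ) < 1 + η * μ := by positivity
  have hs0 : 0 ≤ s := Real.sqrt_nonneg _
  have hs_sq : s ^ 2 = η * μ / (1 + η * μ) := Real.sq_sqrt (by positivity)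
  have hs_lt : s < 1 := by
    have h : η * μ / (1 + η * μ) < 1 := by
      rw [div_lt_one h1a]; nlinarith
    nlinarith
  have hden : 0 < 1 - s := by linarith
  set B := Real.sqrt (η * μ * (1 + η * μ)) with hB_def
  have hB0 : 0 ≤ B := Real.sqrt_nonneg _
  have hB_sq : B ^ 2 = η * μ * (1 + η * μ) := Real.sq_sqrt (by positivity)
  have h1 : s * B = η * μ := by
    rw [hs_def, hB_def, ← Real.sqrt_mul (by positivity)]
    rw [show η * μ / (1 + η * μ) * (η * μ * (1 + η * μ)) = (η * μ) ^ 2 by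
      field_simp]
    exact Real.sqrt_sq (by positivity)
  have h2 : s * (1 + η * μ) = B := by
    rw [hs_def, hB_def,
      show (1:ℝ) + η * μ = Real.sqrt ((1 + η * μ) ^ 2) from
        (Real.sqrt_sq h1a.le).symm, ← Real.sqrt_mul (by positivity)]
    congr 1
    field_simp; ring_nf; rw [Real.sq_sqrt (by positivity)]
  have hmul : (1 - s) * ((1 + η * μ) + B) = 1 := by nlinarith [h1, h2]
  have hinv : 1 / (1 - s) = (1 + η * μ) + B := by
    rw [div_eq_iff hden.ne', mul_comm]; exact hmul.symm
  -- nonnegativity of A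
  have hApos : ∀ k, 0 ≤ A k := by
    intro k
    induction k with
    | zero => exact hA0
    | succ n ih =>
      rw [hrec]
      have hsq := Real.sqrt_nonneg
        (η ^ 2 + 4 * η * A n * (1 + η * μ) * (1 + A n * μ))
      nlinarith [mul_nonneg (mul_nonneg ih hμ.le) hη.le]
  -- main step inequality
  have hstep : ∀ k, A (k + 1) ≥ A k / (1 - s) := by
    intro k
    have hA := hApos k
    set D := η ^ 2 + 4 * η * A k * (1 + η * μ) * (1 + A k * μ) with hD_def
    have hD0 : 0 ≤ D := by positivity
    have hkey : 2 * A k * B ≤ Real.sqrt D := by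
      apply Real.le_sqrt_of_sq_le
      rw [hD_def]
      have hBB : (2 * A k * B) ^ 2 = 4 * (A k) ^ 2 * (η * μ * (1 + η * μ)) := by
        rw [show (2 * A k * B) ^ 2 = 4 * (A k) ^ 2 * B ^ 2 by ring, hB_sq]
      nlinarith [mul_nonneg (mul_nonneg hη.le hA) h1a.le]
    have hgoal : A k * ((1 + η * μ) + B) ≤ A (k + 1) := by
      rw [hrec k]
      nlinarith [hkey]
    calc A k / (1 - s) = A k * (1 / (1 - s)) := by ring
      _ = A k * ((1 + η * μ) + B) := by rw [hinv]
      _ ≤ A (k + 1) := hgoal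
  refine ⟨hstep, fun hA1 k hk => ?_⟩
  induction k with
  | zero => omega
  | succ n ih =>
    rcases Nat.eq_or_lt_of_le hk with h | h
    · simp only [← h]
      simpa using hA1
    · have hn : 1 ≤ n := by omega
      have ihn := ih hn
      have h1n : n + 1 - 1 = n := by omega
      rw [h1n]
      have hpow : (1 - s) ^ n = (1 - s) ^ (n - 1) * (1 - s) := by
        rw [← pow_succ, Nat.sub_add_cancel hn]
      calc η / (1 - s) ^ n = η / (1 - s) ^ (n - 1) / (1 - s) := by
            rw [hpow, div_div]
        _ ≤ A n / (1 - s) := by gcongr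
        _ ≤ A (n + 1) := hstep n
end

section
/- Let η_min > 0 and let (A_k) be a sequence of nonnegative reals with A_0 = 0 and A_{k+1} ≥ A_k + (η_k + √(η_k² + 4η_k A_k))/2 where η_k ≥ η_min for all k. Then A_k ≥ (1/4)(Σ_{i=0}^{k-1} √η_i)² ≥ (η_min/4) k² for all k ≥ 0. -/
open Finset

/-- Quadratic growth of the accelerated coefficients (μ = 0 case):
if `A 0 = 0` and `A_{k+1} ≥ A_k + (η_k + √(η_k² + 4η_k A_k))/2` with `η_k ≥ η_min > 0`,
then `A_k ≥ (1/4)(Σ_{i<k} √η_i)² ≥ (η_min/4)k²`. -/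
theorem coefficients_quadratic_growth (ηmin : ℝ) (hηmin : 0 < ηmin)
    (η : ℕ → ℝ) (hη : ∀ k, ηmin ≤ η k)
    (A : ℕ → ℝ) (hA : ∀ k, 0 ≤ A k) (hA0 : A 0 = 0)
    (hrec : ∀ k, A (k + 1) ≥ A k + (η k + Real.sqrt ((η k) ^ 2 + 4 * η k * A k)) / 2) :
    ∀ k, A k ≥ (∑ i ∈ Finset.range k, Real.sqrt (η i)) ^ 2 / 4 ∧
      (∑ i ∈ Finset.range k, Real.sqrt (η i)) ^ 2 / 4 ≥ ηmin / 4 * (k : ℝ) ^ 2 := by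
  have hηpos : ∀ k, 0 < η k := fun k => lt_of_lt_of_le hηmin (hη k)
  -- main inductive claim on √A
  have key : ∀ k, Real.sqrt (A k) ≥ (∑ i ∈ Finset.range k, Real.sqrt (η i)) / 2 := by
    intro k
    induction k with
    | zero => simp [hA0]
    | succ n ih =>
      rw [Finset.sum_range_succ]
      have hηn := (hηpos n).le
      have hAn := hA n
      have step : A (n + 1) ≥ (Real.sqrt (A n) + Real.sqrt (η n) / 2) ^ 2 := by
        have h1 : Real.sqrt ((η n) ^ 2 + 4 * η n * A n) ≥ 2 * Real.sqrt (η n * A n) := by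
          have : (2 * Real.sqrt (η n * A n)) ^ 2 = 4 * η n * A n := by
            rw [mul_pow, Real.sq_sqrt (by positivity)]; ring
          have h2 : (2 * Real.sqrt (η n * A n)) ^ 2 ≤ (η n) ^ 2 + 4 * η n * A n := by
            rw [this]; nlinarith [sq_nonneg (η n)]
          calc 2 * Real.sqrt (η n * A n)
              = Real.sqrt ((2 * Real.sqrt (η n * A n)) ^ 2) := by
                rw [Real.sqrt_sq (by positivity)]
            _ ≤ Real.sqrt ((η n) ^ 2 + 4 * η n * A n) := Real.sqrt_le_sqrt h2
        have hexp : (Real.sqrt (A n) + Real.sqrt (η n) / 2) ^ 2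
            = A n + η n / 4 + Real.sqrt (η n) * Real.sqrt (A n) := by
          have hA2 : Real.sqrt (A n) ^ 2 = A n := Real.sq_sqrt hAn
          have hη2 : Real.sqrt (η n) ^ 2 = η n := Real.sq_sqrt hηn
          ring_nf
          nlinarith [hA2, hη2]
        have hmul : Real.sqrt (η n * A n) = Real.sqrt (η n) * Real.sqrt (A n) :=
          Real.sqrt_mul hηn _
        have := hrec n
        rw [hexp]
        nlinarith [this, h1, hmul]
      have hrhs : 0 ≤ Real.sqrt (A n) + Real.sqrt (η n) / 2 := by positivity
      have : Real.sqrt (A (n + 1)) ≥ Real.sqrt (A n) + Real.sqrt (η n) / 2 := by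
        calc Real.sqrt (A (n + 1)) ≥ Real.sqrt ((Real.sqrt (A n) + Real.sqrt (η n) / 2) ^ 2) :=
              Real.sqrt_le_sqrt step
          _ = Real.sqrt (A n) + Real.sqrt (η n) / 2 := Real.sqrt_sq hrhs
      calc Real.sqrt (A (n + 1)) ≥ Real.sqrt (A n) + Real.sqrt (η n) / 2 := this
        _ ≥ (∑ i ∈ Finset.range n, Real.sqrt (η i)) / 2 + Real.sqrt (η n) / 2 := by linarith
        _ = ((∑ i ∈ Finset.range n, Real.sqrt (η i)) + Real.sqrt (η n)) / 2 := by ring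
  intro k
  have hS : 0 ≤ ∑ i ∈ Finset.range k, Real.sqrt (η i) :=
    Finset.sum_nonneg fun i _ => Real.sqrt_nonneg _
  constructor
  · have h1 := key k
    have h2 : (∑ i ∈ Finset.range k, Real.sqrt (η i)) / 2 ≤ Real.sqrt (A k) := h1
    have h3 : ((∑ i ∈ Finset.range k, Real.sqrt (η i)) / 2) ^ 2 ≤ Real.sqrt (A k) ^ 2 :=
      pow_le_pow_left₀ (by positivity) h2 2
    rw [Real.sq_sqrt (hA k)] at h3
    calc A k ≥ ((∑ i ∈ Finset.range k, Real.sqrt (η i)) / 2) ^ 2 := h3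
      _ = (∑ i ∈ Finset.range k, Real.sqrt (η i)) ^ 2 / 4 := by ring
  · have hbound : (k : ℝ) * Real.sqrt ηmin ≤ ∑ i ∈ Finset.range k, Real.sqrt (η i) := by
      calc (k : ℝ) * Real.sqrt ηmin = ∑ _i ∈ Finset.range k, Real.sqrt ηmin := by
            rw [Finset.sum_const, Finset.card_range, nsmul_eq_mul]
        _ ≤ ∑ i ∈ Finset.range k, Real.sqrt (η i) :=
            Finset.sum_le_sum fun i _ => Real.sqrt_le_sqrt (hη i)
    have h4 : ((k : ℝ) * Real.sqrt ηmin) ^ 2 ≤ (∑ i ∈ Finset.range k, Real.sqrt (η i)) ^ 2 :=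
      pow_le_pow_left₀ (by positivity) hbound 2
    have h5 : ((k : ℝ) * Real.sqrt ηmin) ^ 2 = ηmin * (k : ℝ) ^ 2 := by
      rw [mul_pow, Real.sq_sqrt hηmin.le]; ring
    rw [h5] at h4
    linarith
end

section
/- (Exact proximal point potential decrease, σ_k = 0 case) Let g be μ-strongly convex proper closed on ℝ^d with minimizer x_⋆, λ > 0, A ≥ 0, and A⁺ > A satisfying A⁺(A⁺ - λ(2+λμ)) - A(2A⁺ - A)(1+λμ)² = 0. Given x, z ∈ ℝ^d, set y = x + ((A⁺-A)(1+μA)/(A⁺ + μA(2A⁺-A)))(z - x), let x⁺ = prox_{λg}(y) with v = (y - x⁺)/λ ∈ ∂g(x⁺), and z⁺ = z + ((A⁺-A)/(1+μA⁺))(μ(x⁺ - z) - v). Then A⁺(g(x⁺) - g(x_⋆)) + ((1+μA⁺)/2)‖z⁺ - x_⋆‖² ≤ A(g(x) - g(x_⋆)) + ((1+μA)/2)‖z - x_⋆‖². -/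
set_option maxHeartbeats 1000000

open RealInnerProductSpace

/-- `x` is the proximal point of `g` with step `lam` at `z`. -/
def IsProx {d : ℕ} (g : EuclideanSpace ℝ (Fin d) → ℝ) (lam : ℝ)
    (z x : EuclideanSpace ℝ (Fin d)) : Prop :=
  ∀ u, lam * g x + ‖x - z‖ ^ 2 / 2 ≤ lam * g u + ‖u - z‖ ^ 2 / 2

lemma key_scalar (mu lam A Ap : ℝ) (hμ : 0 ≤ mu) (hA : 0 ≤ A) (hAp : A < Ap)
    (hq : Ap * (Ap - lam * (2 + lam * mu)) - A * (2 * Ap - A) * (1 + lam * mu) ^ 2 = 0)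
    (a b v w u : ℝ)
    (hw : (Ap + mu*A*(2*Ap-A)) * w
        = (Ap + mu*A*(2*Ap-A)) * (a - lam*v) + (Ap-A)*(1+mu*A)*(b-a))
    (hu : (1+mu*Ap) * u = (1+mu*Ap)*b + (Ap-A)*(mu*(w-b) - v))
    (hD : 0 < Ap + mu*A*(2*Ap-A)) (he : 0 < 1+mu*Ap) :
    A*(-(v*(a-w)) - mu/2*(a-w)^2) + (Ap-A)*(v*w - mu/2*w^2)
      + (1+mu*Ap)/2*u^2 - (1+mu*A)/2*b^2 ≤ 0 := by
  set D := Ap + mu*A*(2*Ap-A) with hDdef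
  set L := A*(-(v*(a-w)) - mu/2*(a-w)^2) + (Ap-A)*(v*w - mu/2*w^2)
      + (1+mu*Ap)/2*u^2 - (1+mu*A)/2*b^2 with hLdef
  have key : (1+mu*Ap)^2*D^2*(2*D)*L
      = -((1+mu*Ap)^2*D^2*(mu*A*(Ap-A)*(1+mu*A)*(a-b)^2)) := by
    rw [hLdef, hDdef]
    linear_combination (D^3*(1+mu*Ap)*(-(Ap-A)*v + (1+mu*A)*b + mu*(Ap-A)*w + (1+mu*Ap)*u)) * hu
      + (D^2*(1+mu*Ap)*((2+lam*mu)*D*v + mu*(Ap-A)*(1+mu*A)*b + mu*A*(1+mu*Ap)*a - mu*D*w)) * hw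
      + (D^3*(1+mu*Ap)*v^2) * hq
  have hpos : 0 ≤ (1+mu*Ap)^2*D^2*(mu*A*(Ap-A)*(1+mu*A)*(a-b)^2) := by
    have h1 : (0:ℝ) ≤ Ap - A := by linarith
    positivity
  have hS : 0 < (1+mu*Ap)^2*D^2*(2*D) := by positivity
  by_contra hcon
  push_neg at hcon
  nlinarith [mul_pos hS hcon]

lemma strong_subgrad {d : ℕ} (μ : ℝ) (hμ : 0 ≤ μ) (g : EuclideanSpace ℝ (Fin d) → ℝ)
    (hg : ConvexOn ℝ Set.univ (fun u => g u - μ / 2 * ‖u‖ ^ 2))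
    (xp v : EuclideanSpace ℝ (Fin d))
    (hsub : ∀ u, g xp + ⟪v, u - xp⟫ ≤ g u) :
    ∀ u, g xp + ⟪v, u - xp⟫ + μ/2 * ‖u - xp‖^2 ≤ g u := by
  intro u
  have hgen : ∀ t : ℝ, 0 < t → t < 1 →
      ⟪v, u - xp⟫ + μ/2 * (1-t) * ‖u - xp‖^2 ≤ g u - g xp := by
    intro t ht ht1
    have hp := hsub (xp + t • (u - xp))
    have hinner : ⟪v, xp + t • (u - xp) - xp⟫ = t * ⟪v, u - xp⟫ := by
      rw [show xp + t • (u - xp) - xp = t • (u - xp) by abel, real_inner_smul_right]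
    rw [hinner] at hp
    have hcv := hg.2 (Set.mem_univ xp) (Set.mem_univ u)
      (by linarith : (0:ℝ) ≤ 1 - t) ht.le (by ring)
    have hpt : (1-t) • xp + t • u = xp + t • (u - xp) := by module
    rw [hpt] at hcv
    simp only [smul_eq_mul] at hcv
    have hnorm : ‖xp + t • (u - xp)‖^2
        = ‖xp‖^2 + 2*t*⟪xp, u - xp⟫ + t^2*‖u - xp‖^2 := by
      rw [norm_add_sq_real, real_inner_smul_right, norm_smul]
      simp [mul_pow, sq_abs]
      ring
    have hnorm2 : ‖u‖^2 = ‖xp‖^2 + 2*⟪xp, u - xp⟫ + ‖u - xp‖^2 := by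
      have h := norm_add_sq_real xp (u - xp)
      simp only [add_sub_cancel] at h
      linarith
    rw [hnorm, hnorm2] at hcv
    have step : g xp + t*⟪v, u - xp⟫ + μ/2*(t*(1-t))*‖u - xp‖^2
        ≤ (1-t)*(g xp) + t*(g u) := by nlinarith [hp, hcv]
    have tstep : t * (⟪v, u - xp⟫ + μ/2 * (1-t) * ‖u - xp‖^2) ≤ t * (g u - g xp) := by
      nlinarith [step]
    exact le_of_mul_le_mul_left (by linarith) ht
  have hhalf := hgen (1/2) (by norm_num) (by norm_num)
  have hC : 0 ≤ μ/2 * ‖u - xp‖^2 := by positivity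
  by_contra hcon
  push_neg at hcon
  set C := μ/2 * ‖u - xp‖^2 with hCdef
  set Dd := g u - g xp - ⟪v, u - xp⟫ with hDdef
  have hDd : Dd < C := by rw [hDdef, hCdef]; linarith
  have hDd0 : (1/2:ℝ) * C ≤ Dd := by rw [hDdef]; nlinarith [hhalf]
  have hC0 : 0 < C := by linarith
  have ht0 : 0 < (C - Dd)/(2*C) := div_pos (by linarith) (by linarith)
  have ht1 : (C - Dd)/(2*C) < 1 := by
    rw [div_lt_one (by linarith)]; linarith
  have hfin := hgen ((C - Dd)/(2*C)) ht0 ht1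
  have hCne : C ≠ 0 := ne_of_gt hC0
  have hval : μ/2 * (1 - (C - Dd)/(2*C)) * ‖u - xp‖^2 = (C + Dd)/2 := by
    have h1 : μ/2 * (1 - (C - Dd)/(2*C)) * ‖u - xp‖^2 = C * (1 - (C - Dd)/(2*C)) := by
      rw [hCdef]; ring
    rw [h1]
    field_simp
    ring
  rw [hval] at hfin
  rw [hDdef] at hDd
  linarith

/-- Exact proximal point potential decrease (σ = 0 case of the accelerated hybrid
proximal extragradient method with strong convexity). -/
theorem exact_prox_potential_decrease {d : ℕ} (μ : ℝ) (hμ : 0 ≤ μ)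
    (g : EuclideanSpace ℝ (Fin d) → ℝ)
    (hg : ConvexOn ℝ Set.univ (fun u => g u - μ / 2 * ‖u‖ ^ 2))
    (hlsc : LowerSemicontinuous g)
    (xstar : EuclideanSpace ℝ (Fin d)) (hmin : ∀ u, g xstar ≤ g u)
    (lam A Ap : ℝ) (hlam : 0 < lam) (hA : 0 ≤ A) (hAp : A < Ap)
    (hquad : Ap * (Ap - lam * (2 + lam * μ)) - A * (2 * Ap - A) * (1 + lam * μ) ^ 2 = 0)
    (x z y xp v zp : EuclideanSpace ℝ (Fin d))
    (hy : y = x + ((Ap - A) * (1 + μ * A) / (Ap + μ * A * (2 * Ap - A))) • (z - x))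
    (hxp : IsProx g lam y xp)
    (hv : v = lam⁻¹ • (y - xp))
    (hsub : ∀ u, g xp + ⟪v, u - xp⟫ ≤ g u)
    (hzp : zp = z + ((Ap - A) / (1 + μ * Ap)) • (μ • (xp - z) - v)) :
    Ap * (g xp - g xstar) + (1 + μ * Ap) / 2 * ‖zp - xstar‖ ^ 2 ≤
      A * (g x - g xstar) + (1 + μ * A) / 2 * ‖z - xstar‖ ^ 2 := by
  have hAp0 : 0 < Ap := lt_of_le_of_lt hA hAp
  have hD : 0 < Ap + μ * A * (2 * Ap - A) := by
    nlinarith [mul_nonneg (mul_nonneg hμ hA) (by linarith : (0:ℝ) ≤ 2 * Ap - A)]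
  have he : 0 < 1 + μ * Ap := by nlinarith [mul_nonneg hμ hAp0.le]
  have hDne : Ap + μ * A * (2 * Ap - A) ≠ 0 := ne_of_gt hD
  have heNe : 1 + μ * Ap ≠ 0 := ne_of_gt he
  have hlv : lam • v = y - xp := by
    rw [hv, smul_smul, mul_inv_cancel₀ hlam.ne', one_smul]
  have hw : ∀ i : Fin d, (Ap + μ*A*(2*Ap-A)) * (xp i - xstar i)
      = (Ap + μ*A*(2*Ap-A)) * ((x i - xstar i) - lam * v i)
        + (Ap-A)*(1+μ*A)*((z i - xstar i) - (x i - xstar i)) := by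
    intro i
    have h1 := congrArg (fun w : EuclideanSpace ℝ (Fin d) => w i) hy
    have h2 := congrArg (fun w : EuclideanSpace ℝ (Fin d) => w i) hlv
    simp only [PiLp.add_apply, PiLp.smul_apply, PiLp.sub_apply, smul_eq_mul] at h1 h2
    have h3 : xp i = x i + ((Ap - A) * (1 + μ * A) / (Ap + μ * A * (2 * Ap - A))) * (z i - x i)
        - lam * v i := by linarith
    have hq3 : (Ap + μ*A*(2*Ap-A)) * ((Ap - A) * (1 + μ * A) / (Ap + μ * A * (2 * Ap - A)))
        = (Ap - A) * (1 + μ * A) := mul_div_cancel₀ _ hDne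
    linear_combination (Ap + μ*A*(2*Ap-A)) * h3 + (z i - x i) * hq3
  have hu : ∀ i : Fin d, (1+μ*Ap) * (zp i - xstar i)
      = (1+μ*Ap)*(z i - xstar i)
        + (Ap-A)*(μ*((xp i - xstar i)-(z i - xstar i)) - v i) := by
    intro i
    have h1 := congrArg (fun w : EuclideanSpace ℝ (Fin d) => w i) hzp
    simp only [PiLp.add_apply, PiLp.smul_apply, PiLp.sub_apply, smul_eq_mul] at h1
    field_simp at h1
    linear_combination h1
  have hstrong := strong_subgrad μ hμ g hg xp v hsub
  have comb : ∀ (f1 f2 f3 f4 f5 f6 : Fin d → ℝ) (c1 c2 c3 c4 c5 c6 : ℝ),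
      c1*(∑ i, f1 i) + c2*(∑ i, f2 i) + c3*(∑ i, f3 i) + c4*(∑ i, f4 i)
        + c5*(∑ i, f5 i) + c6*(∑ i, f6 i)
      = ∑ i, (c1*f1 i + c2*f2 i + c3*f3 i + c4*f4 i + c5*f5 i + c6*f6 i) := by
    intros f1 f2 f3 f4 f5 f6 c1 c2 c3 c4 c5 c6
    simp only [Finset.sum_add_distrib, Finset.mul_sum]
  have KEY : A*(-⟪v, x - xp⟫ - μ/2*‖x - xp‖^2)
      + (Ap-A)*(-⟪v, xstar - xp⟫ - μ/2*‖xstar - xp‖^2)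
      + (1+μ*Ap)/2*‖zp - xstar‖^2 - (1+μ*A)/2*‖z - xstar‖^2 ≤ 0 := by
    have e1 : ⟪v, x - xp⟫ = ∑ i, v i * (x i - xp i) := by
      simp [PiLp.inner_apply, RCLike.inner_apply, conj_trivial]
      exact Finset.sum_congr rfl (fun i _ => mul_comm _ _)
    have e2 : ‖x - xp‖^2 = ∑ i, (x i - xp i)^2 := by
      rw [← real_inner_self_eq_norm_sq]
      rw [real_inner_self_eq_norm_sq, EuclideanSpace.norm_sq_eq]
      simp [Real.norm_eq_abs, sq_abs]
    have e3 : ⟪v, xstar - xp⟫ = ∑ i, v i * (xstar i - xp i) := by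
      simp [PiLp.inner_apply, RCLike.inner_apply, conj_trivial]
      exact Finset.sum_congr rfl (fun i _ => mul_comm _ _)
    have e4 : ‖xstar - xp‖^2 = ∑ i, (xstar i - xp i)^2 := by
      rw [← real_inner_self_eq_norm_sq]
      rw [real_inner_self_eq_norm_sq, EuclideanSpace.norm_sq_eq]
      simp [Real.norm_eq_abs, sq_abs]
    have e5 : ‖zp - xstar‖^2 = ∑ i, (zp i - xstar i)^2 := by
      rw [← real_inner_self_eq_norm_sq]
      rw [real_inner_self_eq_norm_sq, EuclideanSpace.norm_sq_eq]
      simp [Real.norm_eq_abs, sq_abs]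
    have e6 : ‖z - xstar‖^2 = ∑ i, (z i - xstar i)^2 := by
      rw [← real_inner_self_eq_norm_sq]
      rw [real_inner_self_eq_norm_sq, EuclideanSpace.norm_sq_eq]
      simp [Real.norm_eq_abs, sq_abs]
    rw [e1, e2, e3, e4, e5, e6]
    have lhs_eq : A*(-(∑ i, v i * (x i - xp i)) - μ/2*(∑ i, (x i - xp i)^2))
        + (Ap-A)*(-(∑ i, v i * (xstar i - xp i)) - μ/2*(∑ i, (xstar i - xp i)^2))
        + (1+μ*Ap)/2*(∑ i, (zp i - xstar i)^2) - (1+μ*A)/2*(∑ i, (z i - xstar i)^2)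
        = ∑ i, ((-A)*(v i * (x i - xp i)) + (-(A*μ/2))*((x i - xp i)^2)
          + (-(Ap-A))*(v i * (xstar i - xp i)) + (-((Ap-A)*μ/2))*((xstar i - xp i)^2)
          + ((1+μ*Ap)/2)*((zp i - xstar i)^2) + (-((1+μ*A)/2))*((z i - xstar i)^2)) := by
      rw [← comb]; ring
    rw [lhs_eq]
    apply Finset.sum_nonpos
    intro i _
    have hk := key_scalar μ lam A Ap hμ hA hAp hquad
      (x i - xstar i) (z i - xstar i) (v i) (xp i - xstar i) (zp i - xstar i)
      (hw i) (hu i) hD he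
    nlinarith [hk]
  have h1 := hstrong x
  have h2 := hstrong xstar
  have m1 : A*(g xp - g x) ≤ A*(-⟪v, x - xp⟫ - μ/2*‖x - xp‖^2) :=
    mul_le_mul_of_nonneg_left (by linarith) hA
  have m2 : (Ap-A)*(g xp - g xstar)
      ≤ (Ap-A)*(-⟪v, xstar - xp⟫ - μ/2*‖xstar - xp‖^2) :=
    mul_le_mul_of_nonneg_left (by linarith) (by linarith)
  nlinarith [m1, m2, KEY]
end
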